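/- For s ≥ 1, r ≥ 3 and n > r³, let G₁, …, Gₛ be simple graphs on vertex set [n] such that the family is (r−1)-star edge-colored K_r-free. If s ≤ r−2, then the sum of the numbers of edges of the Gᵢ is at most s·C(n,2); if s ≥ r−1, then this sum is at most s·t(n,r−1) + sn, where t(n,r−1) is the number of edges of the Turán graph T(n,r−1). -/
import Mathlib


open Finset

/-- Degree of a vertex in a 3-graph. -/
def degH {n : ℕ} (H : Finset (Finset (Fin n))) (v : Fin n) : ℕ :=
  (H.filter (fun e => v ∈ e)).card

/-- `H` is a 3-uniform hypergraph. -/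
def Uniform3 {n : ℕ} (H : Finset (Finset (Fin n))) : Prop :=
  ∀ e ∈ H, e.card = 3

/-- The matching number of `H` is at most `s`. -/
def MatchingAtMost {n : ℕ} (H : Finset (Finset (Fin n))) (s : ℕ) : Prop :=
  ∀ M ⊆ H, (M : Set (Finset (Fin n))).Pairwise (fun e f => Disjoint e f) → M.card ≤ s

/-- `H` contains a copy of the hypergraph with edge set `F`. -/
def HasCopy {α : Type*} [DecidableEq α] {n : ℕ}
    (F : Set (Finset α)) (H : Finset (Finset (Fin n))) : Prop :=
  ∃ f : α → Fin n, Function.Injective f ∧ ∀ e ∈ F, e.image f ∈ H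

/-- Number of edges of the Turán graph `T(n, r)`. -/
def turanEdges (n r : ℕ) : ℕ := (SimpleGraph.turanGraph n r).edgeFinset.card

/-- The family `G` of graphs (colors) contains no `k`-star edge-colored `K_r`:
no `r` distinct vertices together with a symmetric coloring of the pairs such that
each pair is an edge in its color, exactly `k` colors are used, and each color
class forms a star. -/
def StarColoredCliqueFree (k r : ℕ) {n s : ℕ} (G : Fin s → SimpleGraph (Fin n)) : Prop :=
  ¬ ∃ (f : Fin r → Fin n) (c : Fin r → Fin r → Fin s),
      Function.Injective f ∧
      (∀ i j, c i j = c j i) ∧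
      (∀ i j, i ≠ j → (G (c i j)).Adj (f i) (f j)) ∧
      ((Finset.univ.filter (fun p : Fin r × Fin r => p.1 ≠ p.2)).image
        (fun p => c p.1 p.2)).card = k ∧
      (∀ a : Fin s, ∃ v : Fin r, ∀ i j, i ≠ j → c i j = a → i = v ∨ j = v)

/-! ### Auxiliary development

We prove the bound via a "nested clique" reformulation: a family of graphs admits a
`(r-1)`-star edge-colored `K_r` as soon as it contains vertices `x₀, …, x_{r-1}` and
pairwise distinct colors `c₀, …, c_{r-2}` such that `x_i` is adjacent to every later
`x_j` in color `c_i`.  A greedy/maximum-choice argument (`StarAux.chain_lemma`) produces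
such a configuration as soon as all "total degrees" are larger than `(s-1)·n`, and a
vertex-deletion induction reduces the edge bound to that situation. -/

namespace StarAux

/-- A family of graphs contains no "nested" clique with `m+1` vertices and `m` distinct
colors, where the `i`-th vertex is joined to all later vertices in the `i`-th color. -/
def NoNested {n s : ℕ} (m : ℕ) (G : Fin s → SimpleGraph (Fin n)) : Prop :=
  ¬ ∃ (x : Fin (m+1) → Fin n) (c : Fin m → Fin s),
      Function.Injective x ∧ Function.Injective c ∧
      ∀ (i : Fin m) (j : Fin (m+1)), (i:ℕ) < (j:ℕ) → (G (c i)).Adj (x i.castSucc) (x j)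

lemma count_mod_fin (n s : ℕ) (hs : 0 < s) :
    ((Finset.univ : Finset (Fin (n+1))).filter (fun w : Fin (n+1) => (w : ℕ) % s = n % s)).card
      = n / s + 1 := by
  classical
  have key : ∀ t, t ∈ Finset.range (n / s + 1) → t * s + n % s < n + 1 := by
    intro t ht
    rw [Finset.mem_range] at ht
    have h1 : t ≤ n / s := by omega
    have h2 : t * s ≤ (n / s) * s := Nat.mul_le_mul_right _ h1
    have h3 : s * (n / s) + n % s = n := Nat.div_add_mod n s
    have h4 : (n / s) * s = s * (n / s) := Nat.mul_comm _ _
    omega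
  rw [show n / s + 1 = (Finset.range (n / s + 1)).card by simp]
  apply Finset.card_bij' (i := fun (w : Fin (n+1)) _ => (w : ℕ) / s)
    (j := fun t ht => (⟨t * s + n % s, key t ht⟩ : Fin (n+1)))
  case hi =>
    intro w hw
    rw [Finset.mem_filter] at hw
    rw [Finset.mem_range]
    have h1 : (w : ℕ) ≤ n := by omega
    have := Nat.div_le_div_right (c := s) h1
    omega
  case hj =>
    intro t ht
    simp only [Finset.mem_filter, Finset.mem_univ, true_and]
    have hm : n % s < s := Nat.mod_lt _ hs
    rw [Nat.add_mod, Nat.mul_mod_left, Nat.zero_add]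
    simp [Nat.mod_mod]
  case left_inv =>
    intro w hw
    rw [Finset.mem_filter] at hw
    apply Fin.ext
    simp only []
    have h1 := Nat.div_add_mod (w : ℕ) s
    have hw2 := hw.2
    have : (w:ℕ) / s * s = s * ((w:ℕ)/s) := Nat.mul_comm _ _
    omega
  case right_inv =>
    intro t ht
    rw [Finset.mem_range] at ht
    simp only []
    have hm : n % s < s := Nat.mod_lt _ hs
    rw [Nat.add_comm, Nat.add_mul_div_right _ _ hs, Nat.div_eq_of_lt hm]
    omega

lemma card_edgeFinset_comap_succAbove {n : ℕ} (g : SimpleGraph (Fin (n+1))) [DecidableRel g.Adj]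
    (v : Fin (n+1)) :
    g.edgeFinset.card
      = (SimpleGraph.comap (v.succAbove) g).edgeFinset.card + g.degree v := by
  classical
  have hsplit := Finset.card_filter_add_card_filter_not
    (s := g.edgeFinset) (p := fun e => v ∈ e)
  have hinc : (g.edgeFinset.filter (fun e => v ∈ e)).card = g.degree v := by
    rw [← SimpleGraph.incidenceFinset_eq_filter, SimpleGraph.card_incidenceFinset_eq_degree]
  have hmain : (SimpleGraph.comap (v.succAbove) g).edgeFinset.card
      = (g.edgeFinset.filter (fun e => ¬ v ∈ e)).card := by
    apply Finset.card_bij (i := fun e _ => Sym2.map (fun w => v.succAbove w) e)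
    · intro e he
      induction e with
      | _ a b =>
        simp only [Sym2.map_pair_eq, Finset.mem_filter, SimpleGraph.mem_edgeFinset,
          SimpleGraph.mem_edgeSet] at *
        refine ⟨he, ?_⟩
        intro hv
        rw [Sym2.mem_iff] at hv
        rcases hv with h | h <;> exact Fin.succAbove_ne v _ h.symm
    · intro e₁ h₁ e₂ h₂ heq
      exact Sym2.map.injective (Fin.succAbove_right_injective) heq
    · intro e he
      induction e with
      | _ a b =>
        simp only [Finset.mem_filter, SimpleGraph.mem_edgeFinset, SimpleGraph.mem_edgeSet,
          Sym2.mem_iff] at he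
        push_neg at he
        obtain ⟨hadj, hav, hbv⟩ := he
        obtain ⟨a', ha'⟩ := Fin.exists_succAbove_eq (Ne.symm hav)
        obtain ⟨b', hb'⟩ := Fin.exists_succAbove_eq (Ne.symm hbv)
        refine ⟨s(a', b'), ?_, ?_⟩
        · simp only [SimpleGraph.mem_edgeFinset, SimpleGraph.mem_edgeSet,
            SimpleGraph.comap_adj, ha', hb']
          exact hadj
        · simp [Sym2.map_pair_eq, ha', hb']
  omega

lemma turanEdges_succ (n s : ℕ) (hs : 0 < s) :
    turanEdges (n+1) s = turanEdges n s + (n - n / s) := by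
  classical
  have h := card_edgeFinset_comap_succAbove (SimpleGraph.turanGraph (n+1) s) (Fin.last n)
  have hcomap : (SimpleGraph.comap ((Fin.last n).succAbove)
      (SimpleGraph.turanGraph (n+1) s)).edgeFinset.card = turanEdges n s := by
    have hg : SimpleGraph.comap ((Fin.last n).succAbove) (SimpleGraph.turanGraph (n+1) s)
        = SimpleGraph.turanGraph n s := by
      ext a b
      simp only [SimpleGraph.comap_adj, Fin.succAbove_last, SimpleGraph.turanGraph]
      rw [show ((Fin.castSucc a : Fin (n+1)) : ℕ) = (a : ℕ) from rfl,
          show ((Fin.castSucc b : Fin (n+1)) : ℕ) = (b : ℕ) from rfl]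
    rw [show turanEdges n s = (SimpleGraph.turanGraph n s).edgeFinset.card from rfl]
    congr 1
    apply Finset.ext
    intro e
    simp only [SimpleGraph.mem_edgeFinset]
    rw [hg]
  have hdeg : (SimpleGraph.turanGraph (n+1) s).degree (Fin.last n) = n - n / s := by
    rw [← SimpleGraph.card_neighborFinset_eq_degree]
    have hnb : (SimpleGraph.turanGraph (n+1) s).neighborFinset (Fin.last n)
        = Finset.univ.filter (fun w : Fin (n+1) => ¬ ((w : ℕ) % s = n % s)) := by
      apply Finset.ext
      intro w
      simp only [SimpleGraph.mem_neighborFinset, Finset.mem_filter, Finset.mem_univ, true_and]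
      constructor
      · intro hadj
        have h1 : ((Fin.last n : Fin (n+1)) : ℕ) % s ≠ (w : ℕ) % s := hadj
        rw [Fin.val_last] at h1
        exact fun hh => h1 hh.symm
      · intro hne
        show ((Fin.last n : Fin (n+1)) : ℕ) % s ≠ (w : ℕ) % s
        rw [Fin.val_last]
        exact fun hh => hne hh.symm
    rw [hnb, Finset.filter_not, Finset.card_sdiff_of_subset (Finset.filter_subset _ _),
        count_mod_fin n s hs]
    simp
  rw [show turanEdges (n+1) s = (SimpleGraph.turanGraph (n+1) s).edgeFinset.card from rfl,
      h, hcomap, hdeg]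

lemma chain_lemma {n s : ℕ} (G : Fin s → SimpleGraph (Fin n)) [inst : ∀ i, DecidableRel (G i).Adj]
    (m : ℕ) :
    ∀ (A : Finset (Fin s)) (U : Finset (Fin n)), A.card = m → U.Nonempty →
    (∀ y ∈ U, m * U.card + 1 ≤ U.card + ∑ i ∈ A, ((G i).neighborFinset y ∩ U).card) →
    ∃ (x : Fin (m+1) → Fin n) (c : Fin m → Fin s),
      (∀ j, x j ∈ U) ∧ Function.Injective x ∧ Function.Injective c ∧ (∀ i, c i ∈ A) ∧
      ∀ (i : Fin m) (j : Fin (m+1)), (i : ℕ) < (j : ℕ) →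
        (G (c i)).Adj (x i.castSucc) (x j) := by
  classical
  induction m with
  | zero =>
    intro A U hA hU hdeg
    obtain ⟨y₀, hy₀⟩ := hU
    refine ⟨fun _ => y₀, Fin.elim0, fun _ => hy₀, ?_, ?_, ?_, ?_⟩
    · intro a b _; exact Fin.ext (by omega)
    · intro i; exact i.elim0
    · intro i; exact i.elim0
    · intro i; exact i.elim0
  | succ m ih =>
    intro A U hA hU hdeg
    obtain ⟨y₀, hy₀⟩ := hU
    have hAne : A.Nonempty := Finset.card_pos.mp (by omega)
    obtain ⟨p, hp, hmax⟩ := Finset.exists_max_image (U ×ˢ A)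
      (fun p => ((G p.2).neighborFinset p.1 ∩ U).card)
      (Finset.nonempty_product.mpr ⟨⟨y₀, hy₀⟩, hAne⟩)
    set x₁ := p.1 with hx₁
    set a₁ := p.2 with ha₁
    have hx₁U : x₁ ∈ U := (Finset.mem_product.mp hp).1
    have ha₁A : a₁ ∈ A := (Finset.mem_product.mp hp).2
    set U' := (G a₁).neighborFinset x₁ ∩ U with hU'def
    set σ := U'.card with hσ
    have hσ1 : 1 ≤ σ := by
      by_contra hcon
      have hσ0 : σ = 0 := by omega
      have hall : ∀ i ∈ A, ((G i).neighborFinset y₀ ∩ U).card = 0 := by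
        intro i hi
        have := hmax (y₀, i) (Finset.mem_product.mpr ⟨hy₀, hi⟩)
        simp only at this
        omega
      have hsum0 : ∑ i ∈ A, ((G i).neighborFinset y₀ ∩ U).card = 0 :=
        Finset.sum_eq_zero hall
      have := hdeg y₀ hy₀
      rw [hsum0] at this
      have hU1 : 1 ≤ U.card := Finset.card_pos.mpr ⟨y₀, hy₀⟩
      nlinarith
    have hU'ne : U'.Nonempty := Finset.card_pos.mp (by omega)
    have hU'sub : U' ⊆ U := Finset.inter_subset_right
    set A' := A.erase a₁ with hA'
    have hA'card : A'.card = m := by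
      rw [hA', Finset.card_erase_of_mem ha₁A, hA]
      omega
    have hdeg' : ∀ y ∈ U', m * U'.card + 1 ≤
        U'.card + ∑ i ∈ A', ((G i).neighborFinset y ∩ U').card := by
      intro y hyU'
      have hyU : y ∈ U := hU'sub hyU'
      have p1 : ∀ i : Fin s, ((G i).neighborFinset y ∩ U).card + σ ≤
          ((G i).neighborFinset y ∩ U').card + U.card := by
        intro i
        have hsub1 : ((G i).neighborFinset y ∩ U) ∪ U' ⊆ U :=
          Finset.union_subset Finset.inter_subset_right hU'sub
        have hinter : ((G i).neighborFinset y ∩ U) ∩ U' = (G i).neighborFinset y ∩ U' := by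
          rw [Finset.inter_assoc]
          congr 1
          exact Finset.inter_eq_right.mpr hU'sub
        have := Finset.card_union_add_card_inter ((G i).neighborFinset y ∩ U) U'
        rw [hinter] at this
        have hle := Finset.card_le_card hsub1
        omega
      have p2 : ((G a₁).neighborFinset y ∩ U).card ≤ σ :=
        hmax (y, a₁) (Finset.mem_product.mpr ⟨hyU, ha₁A⟩)
      have p3 := hdeg y hyU
      rw [← Finset.add_sum_erase A _ ha₁A] at p3
      have p4 : ∑ i ∈ A', ((G i).neighborFinset y ∩ U).card + m * σ ≤
          ∑ i ∈ A', ((G i).neighborFinset y ∩ U').card + m * U.card := by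
        have := Finset.sum_le_sum (fun i (_ : i ∈ A') => p1 i)
        rw [Finset.sum_add_distrib, Finset.sum_add_distrib, Finset.sum_const,
            Finset.sum_const, hA'card, smul_eq_mul, smul_eq_mul] at this
        omega
      have e1 : (m+1) * U.card = m * U.card + U.card := by ring
      rw [e1] at p3
      set X := ∑ i ∈ A', ((G i).neighborFinset y ∩ U).card
      set X' := ∑ i ∈ A', ((G i).neighborFinset y ∩ U').card
      set P := m * U.card
      set Q := m * σ
      omega
    obtain ⟨x', c', hxU'', hinjx', hinjc', hcA', hadj'⟩ := ih A' U' hA'card hU'ne hdeg'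
    have hx₁notU' : x₁ ∉ U' := by
      intro hmem
      rw [hU'def] at hmem
      have := (Finset.mem_inter.mp hmem).1
      rw [SimpleGraph.mem_neighborFinset] at this
      exact (G a₁).irrefl this
    refine ⟨Fin.cons x₁ x', Fin.cons a₁ c', ?_, ?_, ?_, ?_, ?_⟩
    · intro j
      rcases Fin.eq_zero_or_eq_succ j with rfl | ⟨j', rfl⟩
      · simpa using hx₁U
      · rw [Fin.cons_succ]
        exact hU'sub (hxU'' j')
    · intro j k hjk
      rcases Fin.eq_zero_or_eq_succ j with rfl | ⟨j', rfl⟩ <;>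
        rcases Fin.eq_zero_or_eq_succ k with rfl | ⟨k', rfl⟩
      · rfl
      · exfalso
        rw [Fin.cons_zero, Fin.cons_succ] at hjk
        exact hx₁notU' (by rw [hjk]; exact hxU'' k')
      · exfalso
        rw [Fin.cons_zero, Fin.cons_succ] at hjk
        exact hx₁notU' (by rw [← hjk]; exact hxU'' j')
      · rw [Fin.cons_succ, Fin.cons_succ] at hjk
        exact congrArg Fin.succ (hinjx' hjk)
    · intro j k hjk
      rcases Fin.eq_zero_or_eq_succ j with rfl | ⟨j', rfl⟩ <;>
        rcases Fin.eq_zero_or_eq_succ k with rfl | ⟨k', rfl⟩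
      · rfl
      · exfalso
        rw [Fin.cons_zero, Fin.cons_succ] at hjk
        have hmem := hcA' k'
        rw [← hjk] at hmem
        exact (Finset.notMem_erase a₁ A) hmem
      · exfalso
        rw [Fin.cons_zero, Fin.cons_succ] at hjk
        have hmem := hcA' j'
        rw [hjk] at hmem
        exact (Finset.notMem_erase a₁ A) hmem
      · rw [Fin.cons_succ, Fin.cons_succ] at hjk
        exact congrArg Fin.succ (hinjc' hjk)
    · intro i
      rcases Fin.eq_zero_or_eq_succ i with rfl | ⟨i', rfl⟩
      · simpa using ha₁A
      · rw [Fin.cons_succ]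
        exact Finset.mem_of_mem_erase (hcA' i')
    · intro i j hij
      rcases Fin.eq_zero_or_eq_succ i with rfl | ⟨i', rfl⟩
      · rcases Fin.eq_zero_or_eq_succ j with rfl | ⟨j', rfl⟩
        · simp at hij
        · simp only [Fin.cons_zero, Fin.cons_succ, Fin.castSucc_zero]
          have h2 := (Finset.mem_inter.mp (hxU'' j')).1
          rw [SimpleGraph.mem_neighborFinset] at h2
          exact h2
      · rcases Fin.eq_zero_or_eq_succ j with rfl | ⟨j', rfl⟩
        · exfalso
          simp [Fin.val_succ] at hij
        · have hlt : (i' : ℕ) < (j' : ℕ) := by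
            simp only [Fin.val_succ] at hij
            omega
          have hh := hadj' i' j' hlt
          rw [Fin.cons_succ, Fin.cons_succ, ← Fin.succ_castSucc, Fin.cons_succ]
          exact hh

lemma core (s : ℕ) (hs : 1 ≤ s) :
    ∀ (n : ℕ) (H : Fin s → SimpleGraph (Fin n)) (inst : ∀ i, DecidableRel (H i).Adj),
      NoNested s H →
      ∑ i, (H i).edgeFinset.card ≤ s * turanEdges n s + s * n := by
  intro n
  induction n using Nat.strong_induction_on with
  | _ n IH =>
    intro H inst hfree
    match n, IH with
    | 0, _ =>
      have hzero : ∀ i : Fin s, (H i).edgeFinset.card = 0 := by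
        intro i
        have := SimpleGraph.card_edgeFinset_le_card_choose_two (G := H i)
        simpa using this
      calc ∑ i, (H i).edgeFinset.card = 0 := by simp [hzero]
        _ ≤ _ := Nat.zero_le _
    | (n' + 1), IH =>
      by_cases hmin : ∃ v : Fin (n'+1), ∑ i, (H i).degree v ≤ s * (n' - n'/s) + s
      · obtain ⟨v, hv⟩ := hmin
        have hfree' : NoNested s (fun i => (H i).comap (v.succAbove)) := by
          rintro ⟨x, c, injx, injc, adj⟩
          exact hfree ⟨v.succAbove ∘ x, c,
            Fin.succAbove_right_injective.comp injx, injc,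
            fun i j hij => adj i j hij⟩
        have hIH := IH n' (by omega) (fun i => (H i).comap (v.succAbove))
          (fun i => SimpleGraph.instDecidableComapAdj v.succAbove (H i)) hfree'
        have hsplit : ∑ i, (H i).edgeFinset.card
            = ∑ i, ((H i).comap (v.succAbove)).edgeFinset.card + ∑ i, (H i).degree v := by
          rw [← Finset.sum_add_distrib]
          apply Finset.sum_congr rfl
          intro i _
          exact card_edgeFinset_comap_succAbove (H i) v
        have htE := turanEdges_succ n' s hs
        have hIH' : ∑ i, ((H i).comap (v.succAbove)).edgeFinset.card
            ≤ s * turanEdges n' s + s * n' := hIH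
        have key : s * turanEdges (n'+1) s + s * (n'+1)
            = s * turanEdges n' s + s * n' + (s * (n' - n'/s) + s) := by
          rw [htE]; ring
        rw [hsplit, key]
        exact Nat.add_le_add hIH' hv
      · push_neg at hmin
        have hmin' : ∀ v : Fin (n'+1), s * (n' - n'/s) + s + 1 ≤ ∑ i, (H i).degree v := by
          intro v; have := hmin v; omega
        have hdiv : s * (n' / s) ≤ n' := by
          calc s * (n' / s) = n' / s * s := Nat.mul_comm _ _
            _ ≤ n' := Nat.div_mul_le_self _ _
        have hsub : s * (n' - n'/s) + s * (n'/s) = s * n' := by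
          rw [← Nat.mul_add]
          congr 1
          have hd2 : n'/s ≤ n' := Nat.div_le_self _ _
          omega
        obtain ⟨x, c, _, injx, injc, _, adj⟩ := chain_lemma H s
          (Finset.univ : Finset (Fin s)) (Finset.univ : Finset (Fin (n'+1)))
          (by simp) ⟨⟨0, by omega⟩, Finset.mem_univ _⟩
          (by
            intro y _
            have h2 : ∑ i ∈ (Finset.univ : Finset (Fin s)),
                ((H i).neighborFinset y ∩ Finset.univ).card = ∑ i, (H i).degree y := by
              apply Finset.sum_congr rfl
              intro i _
              rw [Finset.inter_univ, SimpleGraph.card_neighborFinset_eq_degree]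
            rw [h2]
            have h3 := hmin' y
            have hcard : (Finset.univ : Finset (Fin (n'+1))).card = n' + 1 := by simp
            rw [hcard]
            have hmul2 : s * (n' + 1) = s * n' + s := by ring
            rw [hmul2]
            omega)
        exact absurd ⟨x, c, injx, injc, adj⟩ hfree

lemma free_to_noNested {n s r' : ℕ} (hr' : 2 ≤ r') (G : Fin s → SimpleGraph (Fin n))
    (hfree : StarColoredCliqueFree r' (r'+1) G) : NoNested r' G := by
  rintro ⟨x, c, injx, injc, adj⟩
  apply hfree
  have hrpos : 0 < r' := by omega
  set t : Fin (r'+1) → Fin r' := fun i =>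
    if h : (i : ℕ) < r' then ⟨(i : ℕ), h⟩ else ⟨0, hrpos⟩ with ht
  set cmat : Fin (r'+1) → Fin (r'+1) → Fin s := fun i j => c (t (min i j)) with hcmat
  have hminlt : ∀ i j : Fin (r'+1), i ≠ j → ((min i j : Fin (r'+1)) : ℕ) < r' := by
    intro i j hij
    rcases min_choice i j with h | h
    · by_contra hcon
      have h1 : ((min i j : Fin (r'+1)) : ℕ) = r' := by
        have := (min i j).isLt; omega
      rw [h] at h1
      have h2 : i ≤ j := by
        rw [← h]; exact min_le_right _ _
      rw [Fin.le_def] at h2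
      have h3 : (j : ℕ) = r' := by have := j.isLt; omega
      exact hij (Fin.ext (by omega))
    · by_contra hcon
      have h1 : ((min i j : Fin (r'+1)) : ℕ) = r' := by
        have := (min i j).isLt; omega
      rw [h] at h1
      have h2 : j ≤ i := by
        rw [← h]; exact min_le_left _ _
      rw [Fin.le_def] at h2
      have h3 : (i : ℕ) = r' := by have := i.isLt; omega
      exact hij (Fin.ext (by omega))
  have htval : ∀ (i : Fin (r'+1)) (h : (i:ℕ) < r'), t i = ⟨(i:ℕ), h⟩ := by
    intro i h
    rw [ht]
    simp only [h, dif_pos]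
  have main : ∀ i j : Fin (r'+1), (i : ℕ) < (j : ℕ) → (G (cmat i j)).Adj (x i) (x j) := by
    intro i j hij
    have hmin : min i j = i := min_eq_left (by rw [Fin.le_def]; omega)
    have hilt : (i : ℕ) < r' := by have := j.isLt; omega
    have hcm : cmat i j = c ⟨(i:ℕ), hilt⟩ := by
      simp only [hcmat, hmin]
      rw [htval i hilt]
    rw [hcm]
    have hcast : (⟨(i:ℕ), hilt⟩ : Fin r').castSucc = i := Fin.ext rfl
    have := adj ⟨(i:ℕ), hilt⟩ j (by simpa using hij)
    rwa [hcast] at this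
  refine ⟨x, cmat, injx, ?_, ?_, ?_, ?_⟩
  · intro i j
    simp only [hcmat, min_comm i j]
  · intro i j hij
    rcases lt_trichotomy (i : ℕ) (j : ℕ) with h | h | h
    · exact main i j h
    · exact absurd (Fin.ext h) hij
    · have hm : cmat i j = cmat j i := by simp only [hcmat, min_comm i j]
      rw [hm]
      exact (main j i h).symm
  · have himg : (Finset.univ.filter (fun p : Fin (r'+1) × Fin (r'+1) => p.1 ≠ p.2)).image
        (fun p => cmat p.1 p.2) = Finset.univ.image c := by
      apply Finset.ext
      intro a
      constructor
      · intro ha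
        obtain ⟨p, hp, hpa⟩ := Finset.mem_image.mp ha
        refine Finset.mem_image.mpr ⟨t (min p.1 p.2), Finset.mem_univ _, ?_⟩
        rw [← hpa, hcmat]
      · intro ha
        obtain ⟨k, _, hka⟩ := Finset.mem_image.mp ha
        have hk1 : (k : ℕ) < r' + 1 := by have := k.isLt; omega
        have hk2 : (k : ℕ) + 1 < r' + 1 := by have := k.isLt; omega
        have hne : ((⟨(k:ℕ), hk1⟩ : Fin (r'+1)), (⟨(k:ℕ)+1, hk2⟩ : Fin (r'+1))).1
            ≠ ((⟨(k:ℕ), hk1⟩ : Fin (r'+1)), (⟨(k:ℕ)+1, hk2⟩ : Fin (r'+1))).2 := by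
          intro hcon
          have := congrArg Fin.val hcon
          simp at this
        refine Finset.mem_image.mpr ⟨(⟨(k:ℕ), hk1⟩, ⟨(k:ℕ)+1, hk2⟩),
          Finset.mem_filter.mpr ⟨Finset.mem_univ _, hne⟩, ?_⟩
        simp only [hcmat]
        have hmin : min (⟨(k:ℕ), hk1⟩ : Fin (r'+1)) ⟨(k:ℕ)+1, hk2⟩ = ⟨(k:ℕ), hk1⟩ :=
          min_eq_left (by rw [Fin.le_def]; simp)
        rw [hmin, htval _ (by simpa using k.isLt), ← hka]
    rw [himg, Finset.card_image_of_injective _ injc]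
    simp
  · intro a
    by_cases hex : ∃ m, c m = a
    · obtain ⟨m, hm⟩ := hex
      refine ⟨⟨(m:ℕ), by have := m.isLt; omega⟩, ?_⟩
      intro i j hij hc
      have hlt := hminlt i j hij
      have hcm : cmat i j = c ⟨((min i j : Fin (r'+1)) : ℕ), hlt⟩ := by
        simp only [hcmat]
        rw [htval _ hlt]
      rw [hcm, ← hm] at hc
      have heq := injc hc
      have hval : ((min i j : Fin (r'+1)) : ℕ) = (m : ℕ) := congrArg Fin.val heq
      rcases min_choice i j with h | h
      · left; rw [h] at hval; exact Fin.ext (by simpa using hval)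
      · right; rw [h] at hval; exact Fin.ext (by simpa using hval)
    · refine ⟨⟨0, by omega⟩, ?_⟩
      intro i j hij hc
      exact absurd ⟨t (min i j), hc⟩ hex

lemma exists_topk {α : Type*} [DecidableEq α] (f : α → ℕ) :
    ∀ (k : ℕ) (S : Finset α), k ≤ S.card →
    ∃ C, C ⊆ S ∧ C.card = k ∧ ∀ i ∈ S, i ∉ C → ∀ j ∈ C, f i ≤ f j := by
  intro k
  induction k with
  | zero =>
    intro S _
    exact ⟨∅, Finset.empty_subset _, rfl, by simp⟩
  | succ k ih =>
    intro S hS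
    have hSne : S.Nonempty := Finset.card_pos.mp (by omega)
    obtain ⟨m, hmS, hmax⟩ := Finset.exists_max_image S f hSne
    have hcard : k ≤ (S.erase m).card := by
      rw [Finset.card_erase_of_mem hmS]; omega
    obtain ⟨C', hC'sub, hC'card, hC'top⟩ := ih (S.erase m) hcard
    have hmnot : m ∉ C' := fun h => Finset.notMem_erase m S (hC'sub h)
    refine ⟨insert m C', ?_, ?_, ?_⟩
    · exact Finset.insert_subset hmS (hC'sub.trans (Finset.erase_subset _ _))
    · rw [Finset.card_insert_of_notMem hmnot, hC'card]
    · intro i hiS hiC j hjC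
      rcases Finset.mem_insert.mp hjC with rfl | hjC'
      · exact hmax i hiS
      · have hine : i ≠ m := by
          rintro rfl
          exact hiC (Finset.mem_insert_self _ _)
        have hiS' : i ∈ S.erase m := Finset.mem_erase.mpr ⟨hine, hiS⟩
        exact hC'top i hiS' (fun h => hiC (Finset.mem_insert_of_mem h)) j hjC'

end StarAux

theorem stmt_3 {n s r : ℕ} (hs : 1 ≤ s) (hr : 3 ≤ r) (hn : r ^ 3 < n)
    (G : Fin s → SimpleGraph (Fin n)) [∀ i, DecidableRel (G i).Adj]
    (hfree : StarColoredCliqueFree (r - 1) r G) :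
    (s ≤ r - 2 → ∑ i, (G i).edgeFinset.card ≤ s * n.choose 2) ∧
    (r - 1 ≤ s → ∑ i, (G i).edgeFinset.card ≤ s * turanEdges n (r - 1) + s * n) := by
  classical
  constructor
  · intro _
    calc ∑ i, (G i).edgeFinset.card ≤ ∑ _i : Fin s, n.choose 2 := by
          apply Finset.sum_le_sum
          intro i _
          have := SimpleGraph.card_edgeFinset_le_card_choose_two (G := G i)
          simpa using this
      _ = s * n.choose 2 := by
          rw [Finset.sum_const, Finset.card_univ, Fintype.card_fin, smul_eq_mul]
  · intro hrs
    obtain ⟨r', rfl⟩ : ∃ r', r = r' + 1 := ⟨r - 1, by omega⟩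
    have hr2 : 2 ≤ r' := by omega
    have hr1 : r' + 1 - 1 = r' := by omega
    rw [hr1] at hrs ⊢
    rw [hr1] at hfree
    have hbig : StarAux.NoNested r' G := StarAux.free_to_noNested hr2 G hfree
    obtain ⟨C, _, hCcard, htop⟩ := StarAux.exists_topk
      (fun i => (G i).edgeFinset.card) r' (Finset.univ : Finset (Fin s))
      (by rw [Finset.card_univ, Fintype.card_fin]; exact hrs)
    set ι := C.orderEmbOfFin hCcard with hι
    have hinj : Function.Injective ι := (C.orderEmbOfFin hCcard).injective
    have hNN : StarAux.NoNested r' (fun i => G (ι i)) := by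
      rintro ⟨x, cc, injx, injcc, adj⟩
      exact hbig ⟨x, fun i => ι (cc i), injx,
        fun a b hab => injcc (hinj hab), adj⟩
    have hcore := StarAux.core r' (by omega) n (fun i => G (ι i))
      (fun i => inferInstance) hNN
    have hsum : ∑ i : Fin r', (G (ι i)).edgeFinset.card
        = ∑ j ∈ C, (G j).edgeFinset.card := by
      apply Finset.sum_bij (i := fun (i : Fin r') _ => ι i)
      · intro i _
        exact Finset.orderEmbOfFin_mem C hCcard i
      · intro a _ b _ h
        exact hinj h
      · intro j hj
        have hrange := Finset.range_orderEmbOfFin C hCcard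
        have hj' : j ∈ Set.range (C.orderEmbOfFin hCcard) := by
          rw [hrange]
          exact hj
        obtain ⟨i, hi⟩ := hj'
        exact ⟨i, Finset.mem_univ _, hi⟩
      · intro i _
        rfl
    have hCbound : ∑ j ∈ C, (G j).edgeFinset.card
        ≤ r' * (turanEdges n r' + n) := by
      rw [← hsum]
      calc ∑ i : Fin r', (G (ι i)).edgeFinset.card
          ≤ r' * turanEdges n r' + r' * n := hcore
        _ = r' * (turanEdges n r' + n) := by ring
    have houtside : ∀ j : Fin s, j ∉ C →
        (G j).edgeFinset.card ≤ turanEdges n r' + n := by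
      intro j hj
      have h1 : C.card • (G j).edgeFinset.card ≤ ∑ c ∈ C, (G c).edgeFinset.card := by
        apply Finset.card_nsmul_le_sum
        intro c hc
        exact htop j (Finset.mem_univ _) hj c hc
      rw [hCcard, smul_eq_mul] at h1
      have h2 : r' * (G j).edgeFinset.card ≤ r' * (turanEdges n r' + n) :=
        le_trans h1 hCbound
      exact Nat.le_of_mul_le_mul_left h2 (by omega)
    have hsplit : ∑ i, (G i).edgeFinset.card
        = ∑ j ∈ C, (G j).edgeFinset.card + ∑ j ∈ Cᶜ, (G j).edgeFinset.card :=
      (Finset.sum_add_sum_compl C _).symm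
    have hcompl : (Cᶜ : Finset (Fin s)).card = s - r' := by
      rw [Finset.card_compl, hCcard, Fintype.card_fin]
    have houtsum : ∑ j ∈ Cᶜ, (G j).edgeFinset.card ≤ (s - r') * (turanEdges n r' + n) := by
      calc ∑ j ∈ Cᶜ, (G j).edgeFinset.card
          ≤ (Cᶜ : Finset (Fin s)).card • (turanEdges n r' + n) := by
            apply Finset.sum_le_card_nsmul
            intro j hj
            exact houtside j (Finset.mem_compl.mp hj)
        _ = (s - r') * (turanEdges n r' + n) := by rw [hcompl, smul_eq_mul]
    have hfinal : r' * (turanEdges n r' + n) + (s - r') * (turanEdges n r' + n)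
        = s * turanEdges n r' + s * n := by
      rw [← Nat.add_mul]
      have : r' + (s - r') = s := by omega
      rw [this]
      ring
    rw [hsplit, ← hfinal]
    exact Nat.add_le_add hCbound houtsum
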